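/- arXiv:1512.03868 — 2 statements merged into one kernel-verified Lean document; each statement's English description precedes it below -/
import Mathlib

section
/- Let A be a continuous dcpo, and for x ∈ A define I_x = {y ∈ A | the pair {x,y} has no upper bound in A} and J_x = {y ∈ A | x ∈ Int(I_y)}, where Int denotes Scott interior. If f : A → P(A) is any Scott continuous function (monotone with respect to set inclusion and satisfying f(⊔B) = ⋃_{b∈B} f(b) for every nonempty directed B ⊆ A) such that f(x) ⊆ I_x for all x ∈ A, then f(x) ⊆ J_x for all x ∈ A. In other words, J is the largest Scott continuous approximation of the negative-information map I. -/
/-- `x` is way below `y`: for every nonempty directed set `S` possessing a least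
upper bound `b` with `y ≤ b`, there is `s ∈ S` with `x ≤ s`. -/
def wayBelow {α : Type*} [Preorder α] (x y : α) : Prop :=
  ∀ S : Set α, S.Nonempty → DirectedOn (· ≤ ·) S → ∀ b : α, IsLUB S b → y ≤ b → ∃ s ∈ S, x ≤ s

/-- A directed complete partial order: every directed subset (including `∅`,
so there is a least element) has a least upper bound. -/
def IsDcpo (α : Type*) [Preorder α] : Prop :=
  ∀ S : Set α, DirectedOn (· ≤ ·) S → ∃ b, IsLUB S b

/-- Bounded completeness: every subset with an upper bound has a least upper bound. -/
def BoundedComplete (α : Type*) [Preorder α] : Prop :=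
  ∀ S : Set α, (∃ b, ∀ s ∈ S, s ≤ b) → ∃ m, IsLUB S m

/-- Algebraicity: for every element `a`, the set of compact elements below `a` is
(nonempty and) directed with least upper bound `a`. -/
def IsAlgebraicDom (α : Type*) [Preorder α] : Prop :=
  ∀ a : α, ({k : α | wayBelow k k ∧ k ≤ a}).Nonempty ∧
    DirectedOn (· ≤ ·) {k : α | wayBelow k k ∧ k ≤ a} ∧
    IsLUB {k : α | wayBelow k k ∧ k ≤ a} a

/-- `K` is a basis of a continuous dcpo: for every `a`, the set of elements of `K`
way below `a` is (nonempty and) directed with least upper bound `a`. -/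
def IsDomBasis {α : Type*} [Preorder α] (K : Set α) : Prop :=
  ∀ a : α, ({k ∈ K | wayBelow k a}).Nonempty ∧
    DirectedOn (· ≤ ·) {k ∈ K | wayBelow k a} ∧
    IsLUB {k ∈ K | wayBelow k a} a

/-- Scott open sets: upper sets inaccessible by least upper bounds of nonempty
directed sets. -/
def ScottOpen {α : Type*} [Preorder α] (U : Set α) : Prop :=
  (∀ x ∈ U, ∀ y, x ≤ y → y ∈ U) ∧
  ∀ S : Set α, S.Nonempty → DirectedOn (· ≤ ·) S → ∀ b : α, IsLUB S b → b ∈ U → ∃ s ∈ S, s ∈ U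

/-- Interior in the Scott topology: the largest Scott open subset. -/
def scottInt {α : Type*} [Preorder α] (B : Set α) : Set α :=
  ⋃₀ {U : Set α | ScottOpen U ∧ U ⊆ B}

/-- Negative information about `x`: the elements inconsistent with `x`
(the pair has no upper bound). -/
def negSet {α : Type*} [Preorder α] (x : α) : Set α :=
  {y | ¬∃ b, x ≤ b ∧ y ≤ b}

/-- `J_x = {y | x ∈ Int (I_y)}`, the continuous approximation of `I_x = negSet x`. -/
def jSet {α : Type*} [Preorder α] (x : α) : Set α :=
  {y | x ∈ scottInt (negSet y)}

/-- The set of total (maximal) elements. -/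
def TotalElems (α : Type*) [Preorder α] : Set α := {x | ∀ y, x ≤ y → y = x}

/-- in a continuous dcpo, `J` is the largest Scott continuous
approximation of the negative-information map `I`: every Scott continuous
`f : A → P(A)` with `f x ⊆ I_x` for all `x` satisfies `f x ⊆ J_x` for all `x`. -/
theorem stmt18 {α : Type*} [PartialOrder α]
    (hd : IsDcpo α) (K : Set α) (hK : IsDomBasis K)
    (f : α → Set α)
    (hmono : ∀ x y : α, x ≤ y → f x ⊆ f y)
    (hcont : ∀ B : Set α, B.Nonempty → DirectedOn (· ≤ ·) B → ∀ s : α, IsLUB B s →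
      f s = ⋃ b ∈ B, f b)
    (hsub : ∀ x : α, f x ⊆ negSet x) :
    ∀ x : α, f x ⊆ jSet x := by
  intro x y hy
  refine Set.mem_sUnion.2 ⟨{z | y ∈ f z}, ⟨⟨?_, ?_⟩, ?_⟩, hy⟩
  · intro a ha b hab; exact hmono a b hab ha
  · intro S hS hdir b hb hbU
    have : y ∈ f b := hbU
    rw [hcont S hS hdir b hb] at this
    simpa using this
  · intro z hz hcontra
    obtain ⟨b, hyb, hzb⟩ := hcontra
    exact hsub z hz ⟨b, hzb, hyb⟩
end

section
/- Let A be a continuous dcpo, let Total(A) be the set of maximal elements of A, and for x ∈ A define I_x = {y ∈ A | the pair {x,y} has no upper bound in A} and J_x = {y ∈ A | x ∈ Int(I_y)}, where Int denotes Scott interior. Then the following are equivalent: (1) for every x ∈ A, I_x ∩ Total(A) = Int(I_x) ∩ Total(A) (the order-theoretic form of the Lawson condition); (2) for every x ∈ Total(A), J_x = I_x. Moreover, under these equivalent conditions, for every x ∈ Total(A) one has C_x ∪ J_x = C_x ∪ Int(J_x) = A, where C_x = {y ∈ A | y ⊑ x}. -/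
section Aux
variable {α : Type*} [Preorder α]

lemma wayBelow_le {x y : α} (h : wayBelow x y) : x ≤ y := by
  obtain ⟨s, hs, hxs⟩ := h {y} ⟨y, rfl⟩
    (fun a ha b hb => ⟨y, rfl, le_of_eq ha, le_of_eq hb⟩) y isLUB_singleton le_rfl
  exact hxs.trans (le_of_eq hs)

lemma wayBelow_of_le {x y z : α} (hxy : x ≤ y) (h : wayBelow y z) : wayBelow x z := by
  intro S hS hdir b hb hzb
  obtain ⟨s, hs, hys⟩ := h S hS hdir b hb hzb
  exact ⟨s, hs, hxy.trans hys⟩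

lemma wayBelow_le_trans {x y z : α} (h : wayBelow x y) (hyz : y ≤ z) : wayBelow x z := by
  intro S hS hdir b hb hzb
  exact h S hS hdir b hb (hyz.trans hzb)

lemma interp {K : Set α} (hK : IsDomBasis K) {k b : α} (h : wayBelow k b) :
    ∃ c ∈ K, wayBelow k c ∧ wayBelow c b := by
  set M : Set α := {c | c ∈ K ∧ ∃ c', c' ∈ K ∧ wayBelow c c' ∧ wayBelow c' b} with hM
  obtain ⟨⟨c', hc'⟩, hdirb, hlubb⟩ := hK b
  have hMne : M.Nonempty := by
    obtain ⟨⟨c, hc⟩, _, _⟩ := hK c'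
    exact ⟨c, hc.1, c', hc'.1, hc.2, hc'.2⟩
  have hMdir : DirectedOn (· ≤ ·) M := by
    rintro c1 ⟨hc1K, c1', hc1'K, h11, h1b⟩ c2 ⟨hc2K, c2', hc2'K, h22, h2b⟩
    obtain ⟨c3', hc3', h13, h23⟩ := hdirb c1' ⟨hc1'K, h1b⟩ c2' ⟨hc2'K, h2b⟩
    obtain ⟨hne3, hdir3, hlub3⟩ := hK c3'
    obtain ⟨d1, hd1, hcd1⟩ := (wayBelow_le_trans h11 h13) _ hne3 hdir3 c3' hlub3 le_rfl
    obtain ⟨d2, hd2, hcd2⟩ := (wayBelow_le_trans h22 h23) _ hne3 hdir3 c3' hlub3 le_rfl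
    obtain ⟨d3, hd3, hdd1, hdd2⟩ := hdir3 d1 hd1 d2 hd2
    exact ⟨d3, ⟨hd3.1, c3', hc3'.1, hd3.2, hc3'.2⟩, hcd1.trans hdd1, hcd2.trans hdd2⟩
  have hMlub : IsLUB M b := by
    constructor
    · rintro c ⟨_, c', _, hcc', hc'b⟩
      exact (wayBelow_le hcc').trans (wayBelow_le hc'b)
    · intro u hu
      refine hlubb.2 ?_
      rintro c' ⟨hc'K, hc'b⟩
      obtain ⟨_, _, hlub'⟩ := hK c'
      refine hlub'.2 ?_
      rintro c ⟨hcK, hcc'⟩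
      exact hu ⟨hcK, c', hc'K, hcc', hc'b⟩
  obtain ⟨c, ⟨hcK, c', hc'K, hcc', hc'b⟩, hkc⟩ := h M hMne hMdir b hMlub le_rfl
  exact ⟨c', hc'K, wayBelow_of_le hkc hcc', hc'b⟩

lemma wayBelow_scottOpen {K : Set α} (hK : IsDomBasis K) (k : α) :
    ScottOpen {z : α | wayBelow k z} := by
  constructor
  · intro z hz w hzw
    exact wayBelow_le_trans hz hzw
  · intro S hS hdir b hb hkb
    obtain ⟨c', _, hkc', hc'b⟩ := interp hK hkb
    obtain ⟨s, hs, hc's⟩ := hc'b S hS hdir b hb le_rfl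
    exact ⟨s, hs, wayBelow_le_trans hkc' hc's⟩

lemma scottInt_subset {B : Set α} : scottInt B ⊆ B := by
  rintro x ⟨U, ⟨_, hUB⟩, hx⟩
  exact hUB hx

lemma mem_scottInt {B U : Set α} (hU : ScottOpen U) (hUB : U ⊆ B) {x : α} (hx : x ∈ U) :
    x ∈ scottInt B := ⟨U, ⟨hU, hUB⟩, hx⟩

lemma scottInt_mono {B C : Set α} (h : B ⊆ C) : scottInt B ⊆ scottInt C := by
  rintro x ⟨U, ⟨hU, hUB⟩, hx⟩
  exact ⟨U, ⟨hU, hUB.trans h⟩, hx⟩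

lemma negSet_symm {x y : α} (h : y ∈ negSet x) : x ∈ negSet y := by
  rintro ⟨b, hyb, hxb⟩; exact h ⟨b, hxb, hyb⟩

lemma negSet_mono {x z : α} (h : x ≤ z) : negSet x ⊆ negSet z := by
  rintro w hw ⟨b, hzb, hwb⟩
  exact hw ⟨b, h.trans hzb, hwb⟩

end Aux

/-- for a continuous dcpo, the Lawson condition in the form
`∀ x, I_x ∩ Total = Int(I_x) ∩ Total` is equivalent to `∀ x ∈ Total, J_x = I_x`;
and under these conditions, `C_x ∪ J_x = C_x ∪ Int(J_x) = A` for every total `x`. -/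
theorem stmt19 {α : Type*} [PartialOrder α]
    (hd : IsDcpo α) (K : Set α) (hK : IsDomBasis K) :
    ((∀ x : α, negSet x ∩ TotalElems α = scottInt (negSet x) ∩ TotalElems α) ↔
      (∀ x ∈ TotalElems α, jSet x = negSet x)) ∧
    ((∀ x : α, negSet x ∩ TotalElems α = scottInt (negSet x) ∩ TotalElems α) →
      ∀ x ∈ TotalElems α,
        {y : α | y ≤ x} ∪ jSet x = Set.univ ∧
        {y : α | y ≤ x} ∪ scottInt (jSet x) = Set.univ) := by

  have hiff : (∀ x : α, negSet x ∩ TotalElems α = scottInt (negSet x) ∩ TotalElems α) ↔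
      (∀ x ∈ TotalElems α, jSet x = negSet x) := by
    constructor
    · intro h1 x hx
      ext y
      constructor
      · intro hy
        exact negSet_symm (scottInt_subset hy)
      · intro hy
        have hx2 : x ∈ negSet y ∩ TotalElems α := ⟨negSet_symm hy, hx⟩
        rw [h1 y] at hx2
        exact hx2.1
    · intro h2 x
      ext y
      constructor
      · rintro ⟨hyI, hyT⟩
        have : x ∈ jSet y := by rw [h2 y hyT]; exact negSet_symm hyI
        exact ⟨this, hyT⟩
      · rintro ⟨hyI, hyT⟩
        exact ⟨scottInt_subset hyI, hyT⟩
  refine ⟨hiff, ?_⟩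
  intro h1 x hxT
  have h2 := hiff.mp h1
  have key : ∀ y : α, ¬ y ≤ x → y ∈ scottInt (jSet x) := by
    intro y hyx
    obtain ⟨hne, hdir, hlub⟩ := hK y
    have hex : ∃ k, k ∈ K ∧ wayBelow k y ∧ ¬ k ≤ x := by
      by_contra hcon
      push_neg at hcon
      exact hyx (hlub.2 fun k hk => hcon k hk.1 hk.2)
    obtain ⟨k, hkK, hky, hkx⟩ := hex
    have hkI : k ∈ negSet x := by
      rintro ⟨b, hxb, hkb⟩
      exact hkx (by rw [hxT b hxb] at hkb; exact hkb)
    have hkJ : k ∈ jSet x := by rw [h2 x hxT]; exact hkI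
    refine mem_scottInt (wayBelow_scottOpen hK k) ?_ hky
    intro z hz
    exact scottInt_mono (negSet_mono (wayBelow_le hz)) hkJ
  have hint : {y : α | y ≤ x} ∪ scottInt (jSet x) = Set.univ := by
    ext y
    simp only [Set.mem_union, Set.mem_setOf_eq, Set.mem_univ, iff_true]
    by_cases h : y ≤ x
    · exact Or.inl h
    · exact Or.inr (key y h)
  refine ⟨?_, hint⟩
  ext y
  simp only [Set.mem_union, Set.mem_setOf_eq, Set.mem_univ, iff_true]
  by_cases h : y ≤ x
  · exact Or.inl h
  · exact Or.inr (scottInt_subset (key y h))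
end
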